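/- Let G be a connected graph on n vertices with m edges and let r be a fixed root vertex. An arrow assignment assigns to each vertex v ≠ r one of its neighbors s(v). Let Z_0 be the number of arrow assignments whose edge set {(v, s(v)) : v ≠ r} forms a directed spanning tree oriented toward r, and Z_1 the number of arrow assignments forming a unicyclic subgraph (containing exactly one directed cycle, with the component of r being a tree rooted at r). Then Z_1 ≤ m·n·Z_0. -/

import Mathlib

/-- An arrow assignment for graph `G` with root `r`: each vertex `v ≠ r` points to a
neighbour `s v`, and we set `s r = r` by convention. -/
def IsArrow {V : Type*} (G : SimpleGraph V) (r : V) (s : V → V) : Prop :=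
  s r = r ∧ ∀ v, v ≠ r → G.Adj v (s v)

/-- The arrow assignment forms a spanning tree oriented toward `r`: following successors
from any vertex reaches the root. -/
def ReachesRoot {V : Type*} (r : V) (s : V → V) : Prop := ∀ v, ∃ k, s^[k] v = r

/-- `v` lies on a directed cycle (not through the root). -/
def OnCycle {V : Type*} (r : V) (s : V → V) (v : V) : Prop :=
  v ≠ r ∧ ∃ k, 0 < k ∧ s^[k] v = v

/-- The functional graph of `s` contains exactly one directed cycle: some vertex is on a
cycle, and any two cycle vertices lie on the same cycle. -/
def OneCycle {V : Type*} (r : V) (s : V → V) : Prop :=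
  (∃ v, OnCycle r s v) ∧ ∀ u v, OnCycle r s u → OnCycle r s v → ∃ k, s^[k] u = v

namespace Stmt7Aux

variable {V : Type*} [Fintype V] [DecidableEq V] {G : SimpleGraph V} [DecidableRel G.Adj]

/-- `v` reaches `r` under `s`. -/
def Gd (r : V) (s : V → V) (v : V) : Prop := ∃ k, s^[k] v = r

lemma gd_r (r : V) (s : V → V) : Gd r s r := ⟨0, rfl⟩

lemma gd_iter {r : V} {s : V → V} (hr : s r = r) {v : V} (h : Gd r s v) (m : ℕ) :
    Gd r s (s^[m] v) := by
  obtain ⟨k, hk⟩ := h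
  refine ⟨k, ?_⟩
  rw [← Function.iterate_add_apply, add_comm, Function.iterate_add_apply, hk,
    Function.iterate_fixed hr]

lemma gd_of_iter {r : V} {s : V → V} {v : V} {m : ℕ} (h : Gd r s (s^[m] v)) : Gd r s v := by
  obtain ⟨k, hk⟩ := h
  exact ⟨k + m, by rw [Function.iterate_add_apply]; exact hk⟩

lemma exists_repeat (s : V → V) (v : V) : ∃ i j, i < j ∧ s^[i] v = s^[j] v := by
  obtain ⟨i, j, hne, he⟩ := Finite.exists_ne_map_eq_of_infinite (fun n : ℕ => s^[n] v)
  rcases hne.lt_or_gt with h | h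
  · exact ⟨i, j, h, he⟩
  · exact ⟨j, i, h, he.symm⟩

lemma bad_oncycle {r : V} {s : V → V} {v : V} (hb : ¬ Gd r s v) :
    ∃ m, OnCycle r s (s^[m] v) := by
  obtain ⟨i, j, hij, he⟩ := exists_repeat s v
  refine ⟨i, fun h => hb ⟨i, h⟩, j - i, Nat.sub_pos_of_lt hij, ?_⟩
  rw [← Function.iterate_add_apply, Nat.sub_add_cancel hij.le]
  exact he.symm

lemma frontier {r : V} {s : V → V} {x z : V} (p : G.Walk x z)
    (hx : ¬ Gd r s x) (hz : Gd r s z) :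
    ∃ y w, G.Adj y w ∧ ¬ Gd r s y ∧ Gd r s w := by
  induction p with
  | nil => exact absurd hz hx
  | @cons u v z h q ih =>
    by_cases h' : Gd r s v
    · exact ⟨u, v, h, hx, h'⟩
    · exact ih h' hz

/-- The specification relating a unicyclic `s` to its image data `(e, u, t)`. -/
def Spec (s : V → V) (e : Sym2 V) (u : V) (t : V → V) : Prop :=
  ∃ K a : ℕ, a < K ∧
    (∀ i j, i < j → j ≤ K → s^[i] u ≠ s^[j] u) ∧
    s (s^[K] u) = s^[a] u ∧
    e = s(s^[K] u, s^[a] u) ∧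
    (∀ k ≤ K, t^[k] (s^[K] u) = s^[K - k] u) ∧
    (∀ x, (∀ i ≤ K, x ≠ s^[i] u) → s x = t x)

lemma spec_minhit {s t : V → V} {u : V} {K : ℕ}
    (hd : ∀ i j, i < j → j ≤ K → s^[i] u ≠ s^[j] u)
    (ho : ∀ k ≤ K, t^[k] (s^[K] u) = s^[K - k] u)
    {i : ℕ} (hi : i ≤ K) :
    t^[i] (s^[i] u) = u ∧ ∀ k < i, t^[k] (s^[i] u) ≠ u := by
  have horb : ∀ k ≤ i, t^[k] (s^[i] u) = s^[i - k] u := by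
    intro k hk
    have h1 : s^[i] u = t^[K - i] (s^[K] u) := by
      rw [ho (K - i) (Nat.sub_le _ _)]
      congr 1
      omega
    rw [h1, ← Function.iterate_add_apply, ho (k + (K - i)) (by omega)]
    congr 1
    omega
  constructor
  · have := horb i le_rfl
    simpa using this
  · intro k hk hcon
    rw [horb k hk.le] at hcon
    exact hd 0 (i - k) (by omega) (by omega) (by simpa using hcon.symm)

lemma minhit_unique {t : V → V} {p u : V} {i j : ℕ}
    (hi : t^[i] p = u ∧ ∀ k < i, t^[k] p ≠ u)
    (hj : t^[j] p = u ∧ ∀ k < j, t^[k] p ≠ u) : i = j := by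
  rcases lt_trichotomy i j with h | h | h
  · exact absurd hi.1 (hj.2 i h)
  · exact h
  · exact absurd hj.1 (hi.2 j h)

lemma spec_inj {s₁ s₂ t : V → V} {e : Sym2 V} {u : V}
    (H₁ : Spec s₁ e u t) (H₂ : Spec s₂ e u t) : s₁ = s₂ := by
  obtain ⟨K₁, a₁, haK₁, hd₁, hs₁, he₁, ho₁, hoff₁⟩ := H₁
  obtain ⟨K₂, a₂, haK₂, hd₂, hs₂, he₂, ho₂, hoff₂⟩ := H₂
  have hm₁K := spec_minhit hd₁ ho₁ (le_refl K₁)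
  have hm₁a := spec_minhit hd₁ ho₁ haK₁.le
  have hm₂K := spec_minhit hd₂ ho₂ (le_refl K₂)
  have hm₂a := spec_minhit hd₂ ho₂ haK₂.le
  have hee : s(s₁^[K₁] u, s₁^[a₁] u) = s(s₂^[K₂] u, s₂^[a₂] u) :=
    he₁.symm.trans he₂
  rw [Sym2.eq_iff] at hee
  rcases hee with ⟨hK, ha⟩ | ⟨hKa, haK⟩
  · have hKK : K₁ = K₂ := minhit_unique hm₁K (by rw [hK]; exact hm₂K)
    rw [← hKK] at hd₂ hs₂ ho₂ hoff₂ haK₂ hK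
    have hzz : ∀ i, i ≤ K₁ → s₁^[i] u = s₂^[i] u := by
      intro i hi
      have h1 : t^[K₁ - i] (s₁^[K₁] u) = s₁^[i] u := by
        rw [ho₁ (K₁ - i) (Nat.sub_le _ _)]
        congr 1
        omega
      have h2 : t^[K₁ - i] (s₂^[K₁] u) = s₂^[i] u := by
        rw [ho₂ (K₁ - i) (Nat.sub_le _ _)]
        congr 1
        omega
      rw [← h1, ← h2, hK]
    have haa : s₁^[a₁] u = s₂^[a₂] u := ha
    have ha12 : a₁ = a₂ := by
      have h3 : s₂^[a₁] u = s₂^[a₂] u := by rw [← hzz a₁ haK₁.le, haa]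
      rcases lt_trichotomy a₁ a₂ with h | h | h
      · exact absurd h3 (hd₂ a₁ a₂ h haK₂.le)
      · exact h
      · exact absurd h3.symm (hd₂ a₂ a₁ h haK₁.le)
    funext x
    by_cases hx : ∃ i, i ≤ K₁ ∧ x = s₁^[i] u
    · obtain ⟨i, hi, rfl⟩ := hx
      by_cases hiK : i = K₁
      · rw [hiK, hs₁, hzz K₁ le_rfl, hs₂]
        exact haa
      · rw [← Function.iterate_succ_apply' s₁, hzz (i + 1) (by omega),
          Function.iterate_succ_apply' s₂, hzz i hi]
    · have hx₁ : ∀ i, i ≤ K₁ → x ≠ s₁^[i] u := fun i hi he' => hx ⟨i, hi, he'⟩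
      have hx₂ : ∀ i, i ≤ K₁ → x ≠ s₂^[i] u := fun i hi he' =>
        hx ⟨i, hi, by rw [he', ← hzz i hi]⟩
      rw [hoff₁ x hx₁, ← hoff₂ x hx₂]
  · have e1 : K₁ = a₂ := minhit_unique hm₁K (by rw [hKa]; exact hm₂a)
    have e2 : a₁ = K₂ := minhit_unique hm₁a (by rw [haK]; exact hm₂K)
    omega

lemma spec_exists {r : V} (hconn : G.Connected) {s : V → V}
    (h1 : IsArrow G r s) (h2 : OneCycle r s) :
    ∃ (e : Sym2 V) (u : V) (t : V → V),
      e ∈ G.edgeSet ∧ IsArrow G r t ∧ ReachesRoot r t ∧ Spec s e u t := by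
  classical
  obtain ⟨⟨v0, hv0⟩, hcyc⟩ := h2
  have hsr : s r = r := h1.1
  -- the cycle vertex is bad
  have hv0bad : ¬ Gd r s v0 := by
    rintro ⟨j, hj⟩
    obtain ⟨hv0r, k, hk, hkv⟩ := hv0
    apply hv0r
    have h1' : s^[k * j] v0 = v0 := by
      rw [Function.iterate_mul]
      exact Function.iterate_fixed hkv j
    have hjk : j ≤ k * j := by
      calc j = 1 * j := (one_mul j).symm
      _ ≤ k * j := Nat.mul_le_mul_right j hk
    have h2' : s^[k * j] v0 = r := by
      have hsplit : k * j = (k * j - j) + j := by omega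
      rw [hsplit, Function.iterate_add_apply, hj, Function.iterate_fixed hsr]
    rw [← h1', h2']
  -- a frontier edge
  obtain ⟨y, w, hadj, hybad, hwgd⟩ :=
    frontier (r := r) (s := s) ((hconn.preconnected v0 r).some) hv0bad (gd_r r s)
  have hallbad : ∀ i, ¬ Gd r s (s^[i] y) := fun i hg => hybad (gd_of_iter hg)
  -- first repetition on the orbit of y
  have hP : ∃ p, ∃ i, i < p ∧ s^[i] y = s^[p] y := by
    obtain ⟨i, j, hij, he⟩ := exists_repeat s y
    exact ⟨j, i, hij, he⟩
  obtain ⟨a, haN, haz⟩ := Nat.find_spec hP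
  have hdist : ∀ i j, i < j → j < Nat.find hP → s^[i] y ≠ s^[j] y := by
    intro i j hij hjN hcon
    exact Nat.find_min hP hjN ⟨i, hij, hcon⟩
  set N := Nat.find hP with hNdef
  set K := N - 1 with hKdef
  have hKN : N = K + 1 := by omega
  have haK : a ≤ K := by omega
  have hsK : s (s^[K] y) = s^[a] y := by
    rw [← Function.iterate_succ_apply' s K y, Nat.succ_eq_add_one, ← hKN]
    exact haz.symm
  have hKr : s^[K] y ≠ r := fun h => hallbad K (by rw [h]; exact gd_r r s)
  have haK' : a < K := by
    rcases Nat.lt_or_ge a K with h | h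
    · exact h
    · exfalso
      have haeq : a = K := le_antisymm haK h
      rw [haeq] at hsK
      have hadjK := h1.2 _ hKr
      rw [hsK] at hadjK
      exact G.irrefl hadjK
  -- the rerouted assignment
  set t : V → V := fun x =>
    if hx : ∃ i, i ≤ K ∧ s^[i] y = x then
      (if Nat.find hx = 0 then w else s^[Nat.find hx - 1] y)
    else s x with htdef
  have ht1 : ∀ i, i ≤ K → t (s^[i] y) = if i = 0 then w else s^[i - 1] y := by
    intro i hi
    have hx : ∃ j, j ≤ K ∧ s^[j] y = s^[i] y := ⟨i, hi, rfl⟩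
    have hfind : Nat.find hx = i := by
      rw [Nat.find_eq_iff]
      refine ⟨⟨hi, rfl⟩, ?_⟩
      intro k hk hcon
      exact hdist k i hk (by omega) hcon.2
    rw [htdef]
    simp only [dif_pos hx, hfind]
  have ht2 : ∀ x, (¬ ∃ i, i ≤ K ∧ s^[i] y = x) → t x = s x := by
    intro x hx
    rw [htdef]
    simp only [dif_neg hx]
  have ho : ∀ k, k ≤ K → t^[k] (s^[K] y) = s^[K - k] y := by
    intro k
    induction k with
    | zero => intro _; simp
    | succ n ih =>
      intro hk
      rw [Function.iterate_succ_apply', ih (by omega), ht1 (K - n) (by omega),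
        if_neg (by omega : ¬ (K - n = 0))]
      congr 1 <;> omega
  -- t is an arrow assignment
  have hrM : ¬ ∃ i, i ≤ K ∧ s^[i] y = r := by
    rintro ⟨i, hi, he⟩
    exact hallbad i (by rw [he]; exact gd_r r s)
  have htr : t r = r := by rw [ht2 r hrM, hsr]
  have htarrow : IsArrow G r t := by
    refine ⟨htr, ?_⟩
    intro v hv
    by_cases hx : ∃ i, i ≤ K ∧ s^[i] y = v
    · obtain ⟨i, hi, rfl⟩ := hx
      rw [ht1 i hi]
      by_cases h0 : i = 0
      · rw [if_pos h0, h0]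
        simpa using hadj
      · rw [if_neg h0]
        have hstep : s^[i] y = s (s^[i - 1] y) := by
          rw [← Function.iterate_succ_apply' s (i - 1) y]
          congr 1
          omega
        rw [hstep]
        have hir : s^[i - 1] y ≠ r := fun h => hallbad (i - 1) (by rw [h]; exact gd_r r s)
        exact (h1.2 _ hir).symm
    · rw [ht2 v hx]
      exact h1.2 v hv
  -- good vertices still reach r under t
  have hgd_t : ∀ v, Gd r s v → ∃ k, t^[k] v = r := by
    intro v hv
    obtain ⟨k, hk⟩ := hv
    have hagree : ∀ j, j ≤ k → t^[j] v = s^[j] v := by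
      intro j
      induction j with
      | zero => intro _; simp
      | succ n ih =>
        intro hj
        rw [Function.iterate_succ_apply', Function.iterate_succ_apply', ih (by omega)]
        apply ht2
        rintro ⟨i, hi, he⟩
        exact hallbad i (by rw [he]; exact gd_iter hsr ⟨k, hk⟩ n)
    exact ⟨k, by rw [hagree k le_rfl, hk]⟩
  -- the rerouted path reaches r under t
  have hz_reach : ∀ i, i ≤ K → ∃ k, t^[k] (s^[i] y) = r := by
    intro i
    induction i with
    | zero =>
      intro _
      obtain ⟨k, hk⟩ := hgd_t w hwgd
      refine ⟨k + 1, ?_⟩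
      rw [Function.iterate_add_apply, Function.iterate_one]
      have h00 := ht1 0 (by omega)
      rw [if_pos rfl] at h00
      rw [h00, hk]
    | succ n ih =>
      intro hn
      obtain ⟨k, hk⟩ := ih (by omega)
      refine ⟨k + 1, ?_⟩
      rw [Function.iterate_add_apply, Function.iterate_one]
      have hstep := ht1 (n + 1) hn
      rw [if_neg (Nat.succ_ne_zero n)] at hstep
      simp only [Nat.add_sub_cancel] at hstep
      rw [hstep, hk]
  -- the cycle of s lies inside the rerouted path
  have hcycA : OnCycle r s (s^[a] y) := by
    refine ⟨fun h => hallbad a (by rw [h]; exact gd_r r s), K + 1 - a, by omega, ?_⟩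
    rw [← Function.iterate_add_apply]
    have hsum : K + 1 - a + a = K + 1 := by omega
    rw [hsum, ← hKN]
    exact haz.symm
  have horbM : ∀ m, ∃ i, a ≤ i ∧ i ≤ K ∧ s^[m] (s^[a] y) = s^[i] y := by
    intro m
    induction m with
    | zero => exact ⟨a, le_rfl, haK, by simp⟩
    | succ n ih =>
      obtain ⟨i, hai, hiK, hi⟩ := ih
      rw [Function.iterate_succ_apply', hi]
      by_cases hiK' : i = K
      · rw [hiK']
        exact ⟨a, le_rfl, haK, by rw [hsK]⟩
      · exact ⟨i + 1, by omega, by omega, (Function.iterate_succ_apply' s i y).symm⟩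
  -- everything reaches r under t
  have hreach : ReachesRoot r t := by
    intro v
    by_cases hv : Gd r s v
    · exact hgd_t v hv
    · obtain ⟨m, hm⟩ := bad_oncycle hv
      obtain ⟨k0, hk0⟩ := hcyc _ _ hcycA hm
      obtain ⟨i, hai, hiK, hieq⟩ := horbM k0
      have hexM : ∃ j, ∃ i', i' ≤ K ∧ s^[i'] y = s^[j] v := ⟨m, i, hiK, by rw [← hieq, hk0]⟩
      obtain ⟨i', hi'K, hi'⟩ := Nat.find_spec hexM
      have hagree : ∀ l, l ≤ Nat.find hexM → t^[l] v = s^[l] v := by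
        intro l
        induction l with
        | zero => intro _; simp
        | succ n ih =>
          intro hl
          rw [Function.iterate_succ_apply', Function.iterate_succ_apply', ih (by omega)]
          exact ht2 _ (fun hcon => Nat.find_min hexM (by omega) hcon)
      obtain ⟨k, hk⟩ := hz_reach i' hi'K
      refine ⟨k + Nat.find hexM, ?_⟩
      rw [Function.iterate_add_apply, hagree _ le_rfl, ← hi', hk]
  -- assemble the specification
  refine ⟨s(s^[K] y, s^[a] y), y, t, ?_, htarrow, hreach,
    K, a, haK', ?_, hsK, rfl, ho, ?_⟩
  · rw [SimpleGraph.mem_edgeSet]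
    have := h1.2 _ hKr
    rwa [hsK] at this
  · intro i j hij hjK
    exact hdist i j hij (by omega)
  · intro x hx
    exact (ht2 x (fun ⟨i, hi, he⟩ => hx i hi he.symm)).symm

end Stmt7Aux

theorem stmt7 {V : Type*} [Fintype V] [DecidableEq V] (G : SimpleGraph V)
    [DecidableRel G.Adj] (hconn : G.Connected) (r : V) :
    Nat.card {s : V → V // IsArrow G r s ∧ OneCycle r s}
      ≤ G.edgeFinset.card * Fintype.card V *
        Nat.card {s : V → V // IsArrow G r s ∧ ReachesRoot r s} := by
  classical
  have hex : ∀ s : {s : V → V // IsArrow G r s ∧ OneCycle r s},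
      ∃ p : {e // e ∈ G.edgeFinset} × V × {t : V → V // IsArrow G r t ∧ ReachesRoot r t},
        Stmt7Aux.Spec s.1 (p.1 : Sym2 V) p.2.1 p.2.2.1 := by
    rintro ⟨s, h1, h2⟩
    obtain ⟨e, u, t, hmem, ht1, ht2, hspec⟩ := Stmt7Aux.spec_exists hconn h1 h2
    exact ⟨⟨⟨e, by rwa [SimpleGraph.mem_edgeFinset]⟩, u, ⟨t, ht1, ht2⟩⟩, hspec⟩
  choose F hF using hex
  have hinj : Function.Injective F := by
    intro s₁ s₂ h
    have h1 := hF s₁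
    have h2 := hF s₂
    rw [h] at h1
    exact Subtype.ext (Stmt7Aux.spec_inj h1 h2)
  calc Nat.card {s : V → V // IsArrow G r s ∧ OneCycle r s}
      ≤ Nat.card ({e // e ∈ G.edgeFinset} × V ×
          {t : V → V // IsArrow G r t ∧ ReachesRoot r t}) :=
        Nat.card_le_card_of_injective F hinj
    _ = G.edgeFinset.card * Fintype.card V *
          Nat.card {s : V → V // IsArrow G r s ∧ ReachesRoot r s} := by
        rw [Nat.card_prod, Nat.card_prod, Nat.card_eq_finsetCard, Nat.card_eq_fintype_card,
          mul_assoc]
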